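/- Let K be a non-archimedean local field of characteristic p, m ≥ 2 an integer with p ∤ m, and g(x, y) = y^m - f(x) where f(x) = γ_0 ∏_{i=1}^k (x - γ_i)^{n_i} ∈ O_K[x] splits completely over K with γ_0 ≠ 0. Let T = {i : γ_i ∈ O_K} and suppose T = ∅. Then the reduction of g_1(x, y) := σ f_1(x) + δ y^m modulo the maximal ideal, where σ ∈ O_K^× and f_1 ∈ A_K (so f_1(0) ∈ O_K^×) and δ ∈ O_K, has no singular point over the residue field F_q; consequently every candidate pole of the local zeta function Z_g(s, χ) contributed by the stationary phase formula at this stage has real part -1. -/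

import Mathlib

/- STATEMENT 19: in the case `T = ∅` of Theorem 1.2, with `σ ∈ O_K^×` and
   `f₁ ∈ A_K` (so `f̄₁` is the nonzero constant `c̄ = f̄₁(0)`), the reduction of
   `g₁ = σ f₁(x) + δ y^m` modulo the maximal ideal, namely
   `ḡ₁(x, y) = σ̄ c̄ + δ̄ y^m` with `σ̄ c̄ ≠ 0`, has no singular point over the
   residue field `F_q`; consequently every candidate pole contributed by the
   stationary phase formula at this stage -- i.e. every zero `s` of the
   denominator `1 - q^{-1-s}`, equivalently every `s` with `q^{-1-s} = 1` --
   has real part `-1`. -/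
open MvPolynomial in
theorem stmt_19 {F : Type*} [Field F] [Fintype F] {p : ℕ} [CharP F p]
    (q : ℕ) (hq : q = Fintype.card F)
    (m : ℕ) (hm : 2 ≤ m) (hpm : ¬ p ∣ m)
    (σbar cbar δbar : F) (hσ : σbar ≠ 0) (hc : cbar ≠ 0) :
    (¬ ∃ P : Fin 2 → F,
      eval P (C (σbar * cbar) + C δbar * X 1 ^ m : MvPolynomial (Fin 2) F) = 0 ∧
      eval P (pderiv 0 (C (σbar * cbar) + C δbar * X 1 ^ m : MvPolynomial (Fin 2) F)) = 0 ∧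
      eval P (pderiv 1 (C (σbar * cbar) + C δbar * X 1 ^ m : MvPolynomial (Fin 2) F)) = 0) ∧
    ∀ s : ℂ, (q : ℂ) ^ (-1 - s) = 1 → s.re = -1 := by
  constructor
  · rintro ⟨P, hval, -, hdy⟩
    have hmF : (m : F) ≠ 0 := by
      simpa [CharP.cast_eq_zero_iff F p] using hpm
    simp [pderiv_pow] at hval hdy
    have h1 : δbar * P 1 ^ m = 0 := by
      rcases hdy with h | h | ⟨h, -⟩
      · simp [h]
      · exact absurd h hmF
      · simp [h, zero_pow (show m ≠ 0 by omega)]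
    rw [h1, add_zero] at hval
    exact (mul_ne_zero hσ hc) hval
  · intro s hs
    have hq2 : 1 < q := by rw [hq]; exact Fintype.one_lt_card
    have hq1 : (1:ℝ) < (q:ℝ) := by exact_mod_cast hq2
    have habs := congrArg (‖·‖) hs
    rw [show ((q:ℕ):ℂ) = (((q:ℕ):ℝ):ℂ) by push_cast; ring,
      Complex.norm_cpow_eq_rpow_re_of_pos (by positivity)] at habs
    simp only [Complex.sub_re, Complex.neg_re, Complex.one_re, map_one, norm_one] at habs
    have h0 : -1 - s.re = 0 := by
      by_contra h
      rcases lt_or_gt_of_ne h with hlt | hgt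
      · have := (Real.rpow_lt_rpow_left_iff hq1).2 hlt
        rw [Real.rpow_zero, habs] at this; exact lt_irrefl _ this
      · have := (Real.rpow_lt_rpow_left_iff hq1).2 hgt
        rw [Real.rpow_zero, habs] at this; exact lt_irrefl _ this
    linarith
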